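/- arXiv:1303.4032 — 11 statements merged into one kernel-verified Lean document; each statement's English description precedes it below -/
import Mathlib

section
/- Let a ≥ 5 be an odd integer. Then A_a \ A_{a-2} = { p/q : p, q are positive integers with 1 ≤ p < q, p + q = a, and gcd(p,q) = 1 }, where the set equality is between subsets of ℚ. -/
/-- The slope set `A_a`: rationals expressible as `p/q` with integers
`0 ≤ p < q ≤ a-1`, `p + q ≤ a`, and `p + q` odd. -/
def Aset (a : ℤ) : Set ℚ :=
  {x | ∃ p q : ℤ, 0 ≤ p ∧ p < q ∧ q ≤ a - 1 ∧ p + q ≤ a ∧ Odd (p + q) ∧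
    x = (p : ℚ) / (q : ℚ)}

theorem Aset_diff_eq (a : ℤ) (ha_odd : Odd a) (ha : 5 ≤ a) :
    Aset a \ Aset (a - 2) =
      {x : ℚ | ∃ p q : ℤ, 1 ≤ p ∧ p < q ∧ p + q = a ∧ Int.gcd p q = 1 ∧
        x = (p : ℚ) / (q : ℚ)} := by
  ext x
  simp only [Set.mem_diff, Set.mem_setOf_eq, Aset]
  constructor
  · rintro ⟨⟨p, q, hp0, hpq, hq, hsum, hodd, hx⟩, hnot⟩
    have hq0 : 0 < q := lt_of_le_of_lt hp0 hpq
    have hp1 : 1 ≤ p := by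
      by_contra h
      push_neg at h
      have hp : p = 0 := by omega
      apply hnot
      refine ⟨0, 1, le_refl 0, by norm_num, by omega, by omega, ⟨0, by ring⟩, ?_⟩
      rw [hx, hp]; norm_num
    have hgpos : 0 < (Int.gcd p q : ℤ) := by
      have := Int.gcd_pos_of_ne_zero_right p (show q ≠ 0 by omega)
      exact_mod_cast this
    obtain ⟨p', hp'⟩ : (Int.gcd p q : ℤ) ∣ p := Int.gcd_dvd_left p q
    obtain ⟨q', hq'⟩ : (Int.gcd p q : ℤ) ∣ q := Int.gcd_dvd_right p q
    set g : ℤ := (Int.gcd p q : ℤ) with hg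
    have hcop : Int.gcd p' q' = 1 := by
      have h1 : p / g = p' := by rw [hp']; exact Int.mul_ediv_cancel_left _ (by omega)
      have h2 : q / g = q' := by rw [hq']; exact Int.mul_ediv_cancel_left _ (by omega)
      have h3 := Int.gcd_div_gcd_div_gcd (i := p) (j := q)
      rw [← hg, h1, h2] at h3
      exact h3 (by rw [hg] at hgpos; exact_mod_cast hgpos)
    have hp'1 : 1 ≤ p' := by nlinarith
    have hq'p' : p' < q' := by
      have : g * p' < g * q' := by rw [← hp', ← hq']; exact hpq
      exact lt_of_mul_lt_mul_left this (by omega)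
    have hoddg : Odd g ∧ Odd (p' + q') := by
      rw [← Int.odd_mul]
      have : g * (p' + q') = p + q := by rw [hp', hq']; ring
      rwa [this]
    have hxval : x = (p' : ℚ) / (q' : ℚ) := by
      rw [hx, hp', hq']
      push_cast
      rw [mul_div_mul_left _ _ (show (g : ℚ) ≠ 0 by exact_mod_cast (by omega : g ≠ 0))]
    have hsum' : g * (p' + q') ≤ a := by rw [hp', hq'] at hsum; linarith [hsum]
    by_cases hcase : p' + q' ≤ a - 2
    · exfalso
      apply hnot
      exact ⟨p', q', by omega, hq'p', by omega, by omega, hoddg.2, hxval⟩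
    · push_neg at hcase
      have hne : p' + q' ≠ a - 1 := by
        obtain ⟨k, hk⟩ := hoddg.2
        obtain ⟨j, hj⟩ := ha_odd
        omega
      have hge : a ≤ p' + q' := by omega
      have hle : p' + q' ≤ a := by nlinarith
      exact ⟨p', q', hp'1, hq'p', by omega, hcop, hxval⟩
  · rintro ⟨p, q, hp1, hpq, hsum, hgcd, hx⟩
    have hq0 : 0 < q := by omega
    constructor
    · exact ⟨p, q, by omega, hpq, by omega, by omega, hsum ▸ ha_odd, hx⟩
    · rintro ⟨p'', q'', hp''0, hpq'', hq'', hsum'', hodd'', hx''⟩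
      have hq''0 : 0 < q'' := lt_of_le_of_lt hp''0 hpq''
      have hcross : p * q'' = p'' * q := by
        have h1 : (p : ℚ) / q = (p'' : ℚ) / q'' := by rw [← hx, ← hx'']
        have h2 : (p : ℚ) * q'' = (p'' : ℚ) * q := by
          rw [div_eq_div_iff (by exact_mod_cast hq0.ne') (by exact_mod_cast hq''0.ne')] at h1
          exact h1
        exact_mod_cast h2
      have hcop : IsCoprime q p := by
        rw [Int.isCoprime_iff_gcd_eq_one, Int.gcd_comm]
        exact hgcd
      have hdvd : q ∣ q'' := by
        apply hcop.dvd_of_dvd_mul_left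
        exact ⟨p'', by linarith [hcross]⟩
      obtain ⟨m, hm⟩ := hdvd
      have hm1 : 1 ≤ m := by nlinarith
      have hp''eq : p'' = p * m := by
        have : p * (q * m) = p'' * q := by rw [← hm]; exact hcross
        have h3 : q * (p * m) = q * p'' := by linarith [this]
        have := mul_left_cancel₀ (show q ≠ 0 by omega) h3
        omega
      have : p'' + q'' = m * a := by rw [hp''eq, hm, ← hsum]; ring
      nlinarith
end

section
/- Let a ≥ 3 be an odd integer. Then A_{a-2} is a proper subset of A_a, and B_{a-2} is a proper subset of B_a (as subsets of ℚ). -/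
/-- The slope set `B_a`: rationals expressible as `p/q` with odd integers
`1 ≤ p ≤ q ≤ a-2` and `p + q ≤ a-1`. -/
def Bset (a : ℤ) : Set ℚ :=
  {x | ∃ p q : ℤ, Odd p ∧ Odd q ∧ 1 ≤ p ∧ p ≤ q ∧ q ≤ a - 2 ∧ p + q ≤ a - 1 ∧
    x = (p : ℚ) / (q : ℚ)}

theorem Aset_Bset_ssubset (a : ℤ) (ha_odd : Odd a) (ha : 3 ≤ a) :
    Aset (a - 2) ⊂ Aset a ∧ Bset (a - 2) ⊂ Bset a := by
  constructor
  · rw [Set.ssubset_iff_of_subset]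
    · refine ⟨(1 : ℚ) / ((a : ℚ) - 1), ?_, ?_⟩
      · refine ⟨1, a - 1, by omega, by omega, by omega, by omega,
          by simpa using ha_odd, by push_cast; ring⟩
      · rintro ⟨p, q, h1, h2, h3, h4, h5, h6⟩
        have hq : (0:ℚ) < (q:ℚ) := by exact_mod_cast (by omega : (0:ℤ) < q)
        have ha1 : (0:ℚ) < (a:ℚ) - 1 := by
          have h : ((1:ℤ):ℚ) < (a:ℚ) := by exact_mod_cast (by omega : (1:ℤ) < a)
          push_cast at h; linarith
        rw [div_eq_div_iff ha1.ne' hq.ne'] at h6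
        have h7 : 1 * q = p * (a - 1) := by exact_mod_cast h6
        rw [one_mul] at h7
        rcases h1.lt_or_eq with h0 | h0
        · nlinarith
        · rw [← h0, zero_mul] at h7; omega
    · rintro x ⟨p, q, h1, h2, h3, h4, h5, h6⟩
      exact ⟨p, q, h1, h2, by omega, by omega, h5, h6⟩
  · rw [Set.ssubset_iff_of_subset]
    · refine ⟨(1 : ℚ) / ((a : ℚ) - 2), ?_, ?_⟩
      · obtain ⟨k, hk⟩ := ha_odd
        refine ⟨1, a - 2, odd_one, ⟨k - 1, by omega⟩, by omega, by omega, by omega,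
          by omega, by push_cast; ring⟩
      · rintro ⟨p, q, hop, hoq, h1, h2, h3, h4, h6⟩
        have hq : (0:ℚ) < (q:ℚ) := by exact_mod_cast (by omega : (0:ℤ) < q)
        have ha2 : (0:ℚ) < (a:ℚ) - 2 := by
          have h : ((2:ℤ):ℚ) < (a:ℚ) := by
            exact_mod_cast (by omega : (2:ℤ) < a)
          push_cast at h; linarith
        rw [div_eq_div_iff ha2.ne' hq.ne'] at h6
        have h7 : 1 * q = p * (a - 2) := by exact_mod_cast h6
        rw [one_mul] at h7
        nlinarith
    · rintro x ⟨p, q, hop, hoq, h1, h2, h3, h4, h6⟩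
      exact ⟨p, q, hop, hoq, h1, h2, by omega, by omega, h6⟩
end

section
/- Let a ≥ 3 be an odd integer, let p and q be odd positive integers, let n ≥ 1 be an integer, and let r be an odd positive integer with r ≤ 2a^n. Then the line y = (p/q)(x − r/(2a^n)) contains no point of the plane of the form (u/a^l, v/a^m) with u, v ∈ ℤ and l, m ∈ ℕ; that is, for all integers u, v and all natural numbers l, m one has (v : ℝ)/a^m ≠ (p/q) · (u/a^l − r/(2a^n)). -/
theorem line_through_shifted_base_avoids_dyadic_points
    (a p q : ℤ) (ha_odd : Odd a) (ha : 3 ≤ a)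
    (hp_odd : Odd p) (hp : 0 < p) (hq_odd : Odd q) (hq : 0 < q)
    (n : ℕ) (hn : 1 ≤ n) (r : ℤ) (hr_odd : Odd r) (hr : 0 < r)
    (hr2 : r ≤ 2 * a ^ n) :
    ∀ (u v : ℤ) (l m : ℕ),
      (v : ℝ) / (a : ℝ) ^ m ≠
        ((p : ℝ) / (q : ℝ)) * ((u : ℝ) / (a : ℝ) ^ l - (r : ℝ) / (2 * (a : ℝ) ^ n)) := by
  intro u v l m h
  have ha0 : (a : ℝ) ≠ 0 := by
    have : (0:ℝ) < (a:ℝ) := by exact_mod_cast lt_of_lt_of_le (by norm_num) ha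
    linarith
  have hq0 : (q : ℝ) ≠ 0 := by exact_mod_cast hq.ne'
  field_simp at h
  have hZ : v * (q * (a ^ l * (2 * a ^ n))) =
      p * (u * (2 * a ^ n) - a ^ l * r) * a ^ m := by
    have h' : v * q * a ^ l * 2 * a ^ n = a ^ m * p * (u * 2 * a ^ n - a ^ l * r) := by
      exact_mod_cast h
    linear_combination h'
  have hE : Even (v * (q * (a ^ l * (2 * a ^ n)))) := by
    exact ⟨v * (q * (a ^ l * a ^ n)), by ring⟩
  rw [hZ] at hE
  have hO : Odd (p * (u * (2 * a ^ n) - a ^ l * r) * a ^ m) := by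
    have h1 : Odd (u * (2 * a ^ n) - a ^ l * r) := by
      have : Even (u * (2 * a ^ n)) := ⟨u * a ^ n, by ring⟩
      exact (Even.sub_odd this ((ha_odd.pow).mul hr_odd))
    exact (hp_odd.mul h1).mul ha_odd.pow
  exact (Int.not_odd_iff_even.mpr hE) hO
end

section
/- Let a ≥ 3 be an odd integer, let p and q be odd positive integers, let n ≥ 1 be an integer, and let r be an odd positive integer with r ≤ 2a^n. Then for every natural number N, all integers U, V, and all choices of signs ε, δ ∈ {−1, +1}, the point ((2aU + a + ε)/(2a^{N+1}), (2aV + a + δ)/(2a^{N+1})) does not lie on the line y = (p/q)(x − r/(2a^n)). In other words, a line of slope p/q ∈ B_a based at (r/(2a^n), 0) passes through no corner of any peripheral square of the Sierpinski carpet S_a, of any size. -/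
theorem Bslope_line_avoids_peripheral_corners
    (a p q : ℤ) (ha_odd : Odd a) (ha : 3 ≤ a)
    (hp_odd : Odd p) (hp : 0 < p) (hq_odd : Odd q) (hq : 0 < q)
    (n : ℕ) (hn : 1 ≤ n) (r : ℤ) (hr_odd : Odd r) (hr : 0 < r)
    (hr2 : r ≤ 2 * a ^ n) :
    ∀ (N : ℕ) (U V : ℤ) (ε δ : ℤ), (ε = -1 ∨ ε = 1) → (δ = -1 ∨ δ = 1) →
      ((2 * a * V + a + δ : ℤ) : ℝ) / (2 * (a : ℝ) ^ (N + 1)) ≠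
        ((p : ℝ) / (q : ℝ)) *
          (((2 * a * U + a + ε : ℤ) : ℝ) / (2 * (a : ℝ) ^ (N + 1)) -
            (r : ℝ) / (2 * (a : ℝ) ^ n)) := by
  intro N U V ε δ hε hδ heq
  have haR : (0:ℝ) < (a:ℝ) := by exact_mod_cast lt_of_lt_of_le (by norm_num) ha
  have ha0 : (a:ℝ) ≠ 0 := ne_of_gt haR
  have hq0 : (q:ℝ) ≠ 0 := by exact_mod_cast hq.ne'
  have key : ((q*(2*a*V+a+δ)*a^n : ℤ) : ℝ) =
      ((p*((2*a*U+a+ε)*a^n - r*a^(N+1)) : ℤ) : ℝ) := by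
    have hpn : ((a:ℝ)^(N+1)) ≠ 0 := pow_ne_zero _ ha0
    have hpn' : ((a:ℝ)^n) ≠ 0 := pow_ne_zero _ ha0
    field_simp at heq
    have hc : (4*(a:ℝ)*(a:ℝ)^N) ≠ 0 := by positivity
    refine mul_left_cancel₀ hc ?_
    push_cast
    ring_nf
    ring_nf at heq
    push_cast at heq
    linear_combination (4*(a:ℝ)*(a:ℝ)^N) * heq
  have key' : (q*(2*a*V+a+δ)*a^n : ℤ) = (p*((2*a*U+a+ε)*a^n - r*a^(N+1)) : ℤ) := by
    exact_mod_cast key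
  have hδodd : Odd δ := by rcases hδ with h | h <;> subst h <;> decide
  have hεodd : Odd ε := by rcases hε with h | h <;> subst h <;> decide
  have hEeven : Even (q*(2*a*V+a+δ)*a^n) := by
    have h1 : Even (2*a*V+a+δ) := by
      have : Even (a + δ) := ha_odd.add_odd hδodd
      have h2 : Even (2*a*V) := ⟨a*V, by ring⟩
      simpa [add_assoc] using h2.add this
    exact (h1.mul_left q).mul_right _
  have hOdd : Odd (p*((2*a*U+a+ε)*a^n - r*a^(N+1))) := by
    refine hp_odd.mul ?_
    have hE : Even ((2*a*U+a+ε)*a^n) := by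
      have : Even (2*a*U+a+ε) := by
        have : Even (a + ε) := ha_odd.add_odd hεodd
        have h2 : Even (2*a*U) := ⟨a*U, by ring⟩
        simpa [add_assoc] using h2.add this
      exact this.mul_right _
    exact hE.sub_odd (hr_odd.mul (ha_odd.pow))
  rw [key'] at hEeven
  exact (Int.not_odd_iff_even.mpr hEeven) hOdd
end

section
/- Let a ≥ 3 be an odd integer and let p, q be positive integers with p < q, p + q = a, and gcd(p,q) = 1. Then there exist natural numbers u, v with v ≤ u ≤ q − 1 such that p·(2au + a + 1) = q·(2av + a − 1); moreover v < u unless u = v = 0. Equivalently, the line y = (p/q)x through the origin passes through the point ((2au + a + 1)/(2a²), (2av + a − 1)/(2a²)), which is the inferior (lower-right) corner of a peripheral square of the Sierpinski carpet S_a. -/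
theorem Aslope_new_line_hits_inferior_right_corner
    (a p q : ℤ) (ha_odd : Odd a) (ha : 3 ≤ a)
    (hp : 0 < p) (hpq : p < q) (hsum : p + q = a) (hcop : Int.gcd p q = 1) :
    ∃ u v : ℕ, (v : ℤ) ≤ (u : ℤ) ∧ (u : ℤ) ≤ q - 1 ∧
      p * (2 * a * (u : ℤ) + a + 1) = q * (2 * a * (v : ℤ) + a - 1) ∧
      ((u = 0 ∧ v = 0) ∨ v < u) := by
  have hq : 0 < q := lt_trans hp hpq
  obtain ⟨x, y, hxy⟩ := Int.isCoprime_iff_gcd_eq_one.mpr hcop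
  -- parity: q - p - 1 = 2 * m
  obtain ⟨k, hk⟩ : Odd (p + q) := hsum ▸ ha_odd
  set m : ℤ := k - p with hmdef
  have hm : q - p - 1 = 2 * m := by omega
  have hm0 : 0 ≤ m := by omega
  have hmq : m < q := by omega
  set u' : ℤ := (m * x) % q with hu'def
  set t : ℤ := (m * x) / q with htdef
  have hu'eq : u' = m * x - q * t := by
    rw [hu'def, htdef, Int.emod_def]
  have hu'0 : 0 ≤ u' := Int.emod_nonneg _ (ne_of_gt hq)
  have hu'lt : u' < q := Int.emod_lt_of_pos _ hq
  set v' : ℤ := -m * y - p * t with hv'def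
  have hkey : p * u' - q * v' = m := by
    rw [hu'eq, hv'def]
    linear_combination m * hxy
  clear_value u' v' m
  clear hv'def hu'def hu'eq htdef hmdef
  have hv'0 : 0 ≤ v' := by
    nlinarith [mul_nonneg hp.le hu'0]
  refine ⟨u'.toNat, v'.toNat, ?_, ?_, ?_, ?_⟩
  · rw [Int.toNat_of_nonneg hu'0, Int.toNat_of_nonneg hv'0]
    nlinarith [mul_nonneg hp.le hu'0]
  · rw [Int.toNat_of_nonneg hu'0]; omega
  · rw [Int.toNat_of_nonneg hu'0, Int.toNat_of_nonneg hv'0]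
    linear_combination 2 * a * hkey - a * hm + hsum
  · rcases eq_or_lt_of_le hu'0 with h0 | hpos
    · left
      have : q * v' = -m := by linear_combination -hkey - p * h0
      have hv0 : v' = 0 := by nlinarith
      constructor <;> omega
    · right
      have : v' < u' := by nlinarith
      omega
end

section
/- Let a ≥ 3 be an odd integer and let p, q be integers with 0 ≤ p < q, p + q odd, and p + q ≤ a − 2. Then for all natural numbers u, v and all choices of signs ε, δ ∈ {−1, +1}, one has p·(2au + a + ε) ≠ q·(2av + a + δ). Equivalently, the line y = (p/q)x through the origin passes through no corner of any peripheral square of the Sierpinski carpet S_a. -/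
theorem Aslope_old_line_avoids_peripheral_corners
    (a p q : ℤ) (ha_odd : Odd a) (ha : 3 ≤ a)
    (hp : 0 ≤ p) (hpq : p < q) (hodd : Odd (p + q)) (hsum : p + q ≤ a - 2) :
    ∀ (u v : ℕ) (ε δ : ℤ), (ε = -1 ∨ ε = 1) → (δ = -1 ∨ δ = 1) →
      p * (2 * a * (u : ℤ) + a + ε) ≠ q * (2 * a * (v : ℤ) + a + δ) := by
  intro u v ε δ hε hδ h
  set k : ℤ := 2 * (q * (v : ℤ) - p * (u : ℤ)) + q - p with hkdef
  have hk : p * ε - q * δ = a * k := by rw [hkdef]; linear_combination h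
  have hkodd : Odd k := by
    obtain ⟨m, hm⟩ := hodd
    exact ⟨q * (v : ℤ) - p * (u : ℤ) + m - p, by omega⟩
  have hkne : k ≠ 0 := by
    intro hk0
    obtain ⟨m, hm⟩ := hkodd
    omega
  have h1 : (1 : ℤ) ≤ |k| := Int.one_le_abs hkne
  have h2 : a ≤ |a * k| := by
    rw [abs_mul, abs_of_nonneg (show (0:ℤ) ≤ a by omega)]
    nlinarith
  have hb : |p * ε - q * δ| ≤ a - 2 := by
    rcases hε with rfl | rfl <;> rcases hδ with rfl | rfl <;>
      rw [abs_le] <;> constructor <;> nlinarith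
  rw [hk] at hb
  linarith
end

section
/- Let a ≥ 3 be an odd integer and let p, q be integers with 0 ≤ p < q, p + q odd, and p + q ≤ a − 2. Then the line L = {(x, y) ∈ ℝ² : p·x = q·y} is disjoint from the closed square Q(a,N,U,V) for every natural number N and all integers U, V. In particular, a line through the origin with slope in A_{a−2} is disjoint from every peripheral square of the Sierpinski carpet S_a. -/
/-- The closed axis-parallel square with center `((2U+1)/(2a^N), (2V+1)/(2a^N))`
and side length `1/a^(N+1)`; for `0 ≤ U, V ≤ a^N - 1` these are the squares
removed at stage `N+1` of the construction of the Sierpinski carpet `S_a`. -/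
def carpetSquare (a : ℤ) (N : ℕ) (U V : ℤ) : Set (ℝ × ℝ) :=
  {z | |z.1 - (2 * (U : ℝ) + 1) / (2 * (a : ℝ) ^ N)| ≤ 1 / (2 * (a : ℝ) ^ (N + 1)) ∧
       |z.2 - (2 * (V : ℝ) + 1) / (2 * (a : ℝ) ^ N)| ≤ 1 / (2 * (a : ℝ) ^ (N + 1))}

theorem Aslope_old_line_disjoint_from_peripheral_squares
    (a p q : ℤ) (ha_odd : Odd a) (ha : 3 ≤ a)
    (hp : 0 ≤ p) (hpq : p < q) (hodd : Odd (p + q)) (hsum : p + q ≤ a - 2) :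
    ∀ (N : ℕ) (U V : ℤ),
      Disjoint {z : ℝ × ℝ | (p : ℝ) * z.1 = (q : ℝ) * z.2} (carpetSquare a N U V) := by
  intro N U V
  rw [Set.disjoint_left]
  rintro ⟨x, y⟩ hline ⟨h1, h2⟩
  simp only [Set.mem_setOf_eq] at hline
  have haR : (3:ℝ) ≤ (a:ℝ) := by exact_mod_cast ha
  have ha0 : (0:ℝ) < (a:ℝ) := by linarith
  have hc : (0:ℝ) < (a:ℝ) ^ N := by positivity
  set c : ℝ := (a:ℝ) ^ N with hcdef
  have hpow : (a:ℝ) ^ (N + 1) = c * a := by rw [pow_succ]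
  rw [hpow] at h1 h2
  set e1 : ℝ := x - (2 * (U : ℝ) + 1) / (2 * c) with he1
  set e2 : ℝ := y - (2 * (V : ℝ) + 1) / (2 * c) with he2
  -- the integer K is odd, hence |K| ≥ 1
  have hK_odd : Odd (p * (2 * U + 1) - q * (2 * V + 1)) := by
    rcases hodd with ⟨k, hk⟩
    refine ⟨p * U - q * V - q + k, by linarith [hk]⟩
  have hK_ne : p * (2 * U + 1) - q * (2 * V + 1) ≠ 0 := by
    intro h
    rw [h] at hK_odd
    exact (Int.not_even_iff_odd.mpr hK_odd) Even.zero
  have hK1 : (1:ℝ) ≤ |((p * (2 * U + 1) - q * (2 * V + 1) : ℤ) : ℝ)| := by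
    exact_mod_cast Int.one_le_abs hK_ne
  -- key algebraic identity
  have key : ((p * (2 * U + 1) - q * (2 * V + 1) : ℤ) : ℝ)
      = 2 * c * ((q:ℝ) * e2 - (p:ℝ) * e1) := by
    rw [he1, he2]
    push_cast
    field_simp
    linear_combination (2 * c) * hline
  have hpR : (0:ℝ) ≤ (p:ℝ) := by exact_mod_cast hp
  have hqR : (0:ℝ) < (q:ℝ) := by exact_mod_cast lt_of_le_of_lt hp hpq
  have hbound : |((p * (2 * U + 1) - q * (2 * V + 1) : ℤ) : ℝ)|
      ≤ 2 * c * ((q:ℝ) * |e2| + (p:ℝ) * |e1|) := by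
    rw [key, abs_mul, abs_of_pos (by positivity : (0:ℝ) < 2 * c)]
    gcongr
    calc |(q:ℝ) * e2 - (p:ℝ) * e1| ≤ |(q:ℝ) * e2| + |(p:ℝ) * e1| := abs_sub _ _
      _ = (q:ℝ) * |e2| + (p:ℝ) * |e1| := by
        rw [abs_mul, abs_mul, abs_of_pos hqR, abs_of_nonneg hpR]
  have hsumR : (p:ℝ) + (q:ℝ) ≤ (a:ℝ) - 2 := by exact_mod_cast hsum
  -- combine
  have hfin : (1:ℝ) ≤ 2 * c * ((q:ℝ) * (1 / (2 * (c * a))) + (p:ℝ) * (1 / (2 * (c * a)))) := by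
    refine le_trans hK1 (le_trans hbound ?_)
    gcongr
  have : 2 * c * ((q:ℝ) * (1 / (2 * (c * a))) + (p:ℝ) * (1 / (2 * (c * a))))
      = ((p:ℝ) + (q:ℝ)) / (a:ℝ) := by
    field_simp
    ring
  rw [this] at hfin
  rw [le_div_iff₀ ha0] at hfin
  linarith
end

section
/- Let a ≥ 3 be an odd integer and let p, q be positive integers with p < q and p + q = a. If a point of the line L = {(x, y) ∈ ℝ² : p·x = q·y} lies in the closed square Q(a,N,U,V) for some natural number N and integers U, V, then that point is either the lower-right corner ((2aU + a + 1)/(2a^{N+1}), (2aV + a − 1)/(2a^{N+1})) or the upper-left corner ((2aU + a − 1)/(2a^{N+1}), (2aV + a + 1)/(2a^{N+1})) of Q(a,N,U,V). In particular, a line through the origin with slope in A_a \ A_{a−2} can meet a peripheral square of the Sierpinski carpet S_a only at one of these two corners. -/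
theorem Aslope_new_line_meets_squares_only_at_corners
    (a p q : ℤ) (ha_odd : Odd a) (ha : 3 ≤ a)
    (hp : 0 < p) (hpq : p < q) (hsum : p + q = a)
    (N : ℕ) (U V : ℤ) (z : ℝ × ℝ)
    (hline : (p : ℝ) * z.1 = (q : ℝ) * z.2)
    (hz : z ∈ carpetSquare a N U V) :
    z = (((2 * a * U + a + 1 : ℤ) : ℝ) / (2 * (a : ℝ) ^ (N + 1)),
         ((2 * a * V + a - 1 : ℤ) : ℝ) / (2 * (a : ℝ) ^ (N + 1))) ∨
    z = (((2 * a * U + a - 1 : ℤ) : ℝ) / (2 * (a : ℝ) ^ (N + 1)),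
         ((2 * a * V + a + 1 : ℤ) : ℝ) / (2 * (a : ℝ) ^ (N + 1))) := by
  obtain ⟨hz1, hz2⟩ := hz
  have hA : (0:ℝ) < (a:ℝ) := by exact_mod_cast (by linarith : (0:ℤ) < a)
  have hP : (0:ℝ) < (a:ℝ) ^ N := by positivity
  have hpow : ((a:ℝ)) ^ (N + 1) = (a:ℝ) * (a:ℝ) ^ N := pow_succ' _ _
  have hp' : (0:ℝ) < (p:ℝ) := by exact_mod_cast hp
  have hq' : (0:ℝ) < (q:ℝ) := by exact_mod_cast (lt_trans hp hpq)
  have h2AP : (0:ℝ) < 2 * (a:ℝ) * (a:ℝ) ^ N := by positivity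
  set s : ℝ := 2 * (a:ℝ) * (a:ℝ) ^ N * z.1 - (2 * (a:ℝ) * (U:ℝ) + (a:ℝ)) with hs_def
  set t : ℝ := 2 * (a:ℝ) * (a:ℝ) ^ N * z.2 - (2 * (a:ℝ) * (V:ℝ) + (a:ℝ)) with ht_def
  have hs_eq : s = (z.1 - (2 * (U:ℝ) + 1) / (2 * (a:ℝ) ^ N)) * (2 * (a:ℝ) * (a:ℝ) ^ N) := by
    rw [hs_def]; field_simp
  have ht_eq : t = (z.2 - (2 * (V:ℝ) + 1) / (2 * (a:ℝ) ^ N)) * (2 * (a:ℝ) * (a:ℝ) ^ N) := by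
    rw [ht_def]; field_simp
  have hs_abs : |s| ≤ 1 := by
    rw [hs_eq, abs_mul, abs_of_pos h2AP]
    calc |z.1 - (2 * (U:ℝ) + 1) / (2 * (a:ℝ) ^ N)| * (2 * (a:ℝ) * (a:ℝ) ^ N)
        ≤ 1 / (2 * (a:ℝ) ^ (N + 1)) * (2 * (a:ℝ) * (a:ℝ) ^ N) :=
          mul_le_mul_of_nonneg_right hz1 h2AP.le
      _ = 1 := by rw [hpow]; field_simp
  have ht_abs : |t| ≤ 1 := by
    rw [ht_eq, abs_mul, abs_of_pos h2AP]
    calc |z.2 - (2 * (V:ℝ) + 1) / (2 * (a:ℝ) ^ N)| * (2 * (a:ℝ) * (a:ℝ) ^ N)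
        ≤ 1 / (2 * (a:ℝ) ^ (N + 1)) * (2 * (a:ℝ) * (a:ℝ) ^ N) :=
          mul_le_mul_of_nonneg_right hz2 h2AP.le
      _ = 1 := by rw [hpow]; field_simp
  obtain ⟨hs_lb, hs_ub⟩ := abs_le.mp hs_abs
  obtain ⟨ht_lb, ht_ub⟩ := abs_le.mp ht_abs
  -- the key equation
  set m : ℤ := 2 * q * V + q - 2 * p * U - p with hm_def
  have hkey : (p:ℝ) * s - (q:ℝ) * t = (a:ℝ) * (m:ℝ) := by
    rw [hs_def, ht_def, hm_def]
    push_cast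
    linear_combination (2 * (a:ℝ) * (a:ℝ) ^ N) * hline
  -- m is odd hence nonzero; the bound |a m| ≤ a forces m = ±1
  have hm_odd : Odd m := by
    obtain ⟨k, hk⟩ := ha_odd
    refine ⟨q * V - p * U + k - p, ?_⟩
    have hq2 : q = 2 * k + 1 - p := by omega
    rw [hm_def, hq2]; ring
  have hsum' : (p:ℝ) + (q:ℝ) = (a:ℝ) := by exact_mod_cast hsum
  have hm_bound : |m| ≤ 1 := by
    have h1 : |(a:ℝ) * (m:ℝ)| ≤ (a:ℝ) := by
      rw [← hkey]
      calc |(p:ℝ) * s - (q:ℝ) * t| ≤ |(p:ℝ) * s| + |(q:ℝ) * t| := abs_sub _ _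
        _ = (p:ℝ) * |s| + (q:ℝ) * |t| := by
            rw [abs_mul, abs_mul, abs_of_pos hp', abs_of_pos hq']
        _ ≤ (p:ℝ) * 1 + (q:ℝ) * 1 := by gcongr
        _ = (a:ℝ) := by linarith
    rw [abs_mul, abs_of_pos hA] at h1
    have h2 : |(m:ℝ)| ≤ 1 := by nlinarith [abs_nonneg (m:ℝ)]
    have h3 : ((|m|:ℤ):ℝ) ≤ ((1:ℤ):ℝ) := by rw [Int.cast_abs]; exact_mod_cast h2
    exact_mod_cast h3
  have hm_cases : m = 1 ∨ m = -1 := by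
    obtain ⟨k, hk⟩ := hm_odd
    rcases abs_le.mp hm_bound with ⟨h1, h2⟩
    omega
  rcases hm_cases with hm | hm
  · -- m = 1 : s = 1, t = -1, lower-right corner
    left
    have hm' : ((m:ℤ):ℝ) = 1 := by rw [hm]; norm_num
    rw [hm', mul_one] at hkey
    have heq : (p:ℝ) * (s - 1) = (q:ℝ) * (t + 1) := by linarith
    have h0 : (0:ℝ) ≤ (q:ℝ) * (t + 1) := mul_nonneg hq'.le (by linarith)
    have hle : (q:ℝ) * (t + 1) ≤ 0 := by
      rw [← heq]; exact mul_nonpos_of_nonneg_of_nonpos hp'.le (by linarith)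
    have hqt : (q:ℝ) * (t + 1) = 0 := le_antisymm hle h0
    have hps : (p:ℝ) * (s - 1) = 0 := by rw [heq]; exact hqt
    have ht1 : t = -1 := by
      have := (mul_eq_zero.mp hqt).resolve_left hq'.ne'; linarith
    have hs1 : s = 1 := by
      have := (mul_eq_zero.mp hps).resolve_left hp'.ne'; linarith
    rw [hs_def] at hs1
    rw [ht_def] at ht1
    have hx : z.1 = ((2 * a * U + a + 1 : ℤ) : ℝ) / (2 * (a:ℝ) ^ (N + 1)) := by
      rw [hpow, eq_div_iff (by positivity)]; push_cast; linear_combination hs1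
    have hy : z.2 = ((2 * a * V + a - 1 : ℤ) : ℝ) / (2 * (a:ℝ) ^ (N + 1)) := by
      rw [hpow, eq_div_iff (by positivity)]; push_cast; linear_combination ht1
    exact Prod.ext hx hy
  · -- m = -1 : s = -1, t = 1, upper-left corner
    right
    have hm' : ((m:ℤ):ℝ) = -1 := by rw [hm]; norm_num
    rw [hm'] at hkey
    have heq : (p:ℝ) * (s + 1) = (q:ℝ) * (t - 1) := by linarith
    have h0 : (0:ℝ) ≤ (p:ℝ) * (s + 1) := mul_nonneg hp'.le (by linarith)
    have hle : (p:ℝ) * (s + 1) ≤ 0 := by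
      rw [heq]; exact mul_nonpos_of_nonneg_of_nonpos hq'.le (by linarith)
    have hps : (p:ℝ) * (s + 1) = 0 := le_antisymm hle h0
    have hqt : (q:ℝ) * (t - 1) = 0 := by rw [← heq]; exact hps
    have hs1 : s = -1 := by
      have := (mul_eq_zero.mp hps).resolve_left hp'.ne'; linarith
    have ht1 : t = 1 := by
      have := (mul_eq_zero.mp hqt).resolve_left hq'.ne'; linarith
    rw [hs_def] at hs1
    rw [ht_def] at ht1
    have hx : z.1 = ((2 * a * U + a - 1 : ℤ) : ℝ) / (2 * (a:ℝ) ^ (N + 1)) := by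
      rw [hpow, eq_div_iff (by positivity)]; push_cast; linear_combination hs1
    have hy : z.2 = ((2 * a * V + a + 1 : ℤ) : ℝ) / (2 * (a:ℝ) ^ (N + 1)) := by
      rw [hpow, eq_div_iff (by positivity)]; push_cast; linear_combination ht1
    exact Prod.ext hx hy
end

section
/- Let a ≥ 3 be an odd integer, let p, q be odd positive integers with p ≤ q and p + q ≤ a − 1, let n ≥ 1 be an integer, and let r be an odd positive integer with r ≤ 2a^n. Then the line L = {(x, y) ∈ ℝ² : q·y = p·(x − r/(2a^n))} is disjoint from the closed square Q(a,N,U,V) for every integer N ≥ n and all integers U, V. In particular, a line through (r/(2a^n), 0) with slope in B_a is disjoint from every peripheral square of the Sierpinski carpet S_a of side length less than 1/a^n. -/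
theorem Bslope_line_disjoint_from_small_peripheral_squares
    (a p q : ℤ) (ha_odd : Odd a) (ha : 3 ≤ a)
    (hp_odd : Odd p) (hq_odd : Odd q) (hp : 0 < p) (hpq : p ≤ q)
    (hsum : p + q ≤ a - 1)
    (n : ℕ) (hn : 1 ≤ n) (r : ℤ) (hr_odd : Odd r) (hr : 0 < r)
    (hr2 : r ≤ 2 * a ^ n) :
    ∀ (N : ℕ), n ≤ N → ∀ (U V : ℤ),
      Disjoint
        {z : ℝ × ℝ | (q : ℝ) * z.2 = (p : ℝ) * (z.1 - (r : ℝ) / (2 * (a : ℝ) ^ n))}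
        (carpetSquare a N U V) := by
  intro N hN U V
  rw [Set.disjoint_left]
  rintro ⟨x, y⟩ hline hsq
  obtain ⟨hx, hy⟩ := hsq
  simp only [Set.mem_setOf_eq] at hline hx hy
  have hA0 : (0:ℝ) < (a:ℝ) := by
    have : (3:ℝ) ≤ (a:ℝ) := by exact_mod_cast ha
    linarith
  have hAN : (0:ℝ) < (a:ℝ) ^ N := pow_pos hA0 N
  have hAn : (0:ℝ) < (a:ℝ) ^ n := pow_pos hA0 n
  have hAN1 : (0:ℝ) < (a:ℝ) ^ (N+1) := pow_pos hA0 _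
  have hpow : (a:ℝ) ^ n * (a:ℝ) ^ (N - n) = (a:ℝ) ^ N := by
    rw [← pow_add, Nat.add_sub_cancel' hN]
  have hpow1 : (a:ℝ) ^ (N+1) = (a:ℝ) ^ N * (a:ℝ) := pow_succ _ _
  set K : ℤ := q*(2*V+1) - p*(2*U+1) + p*r*a^(N-n) with hK
  have hKodd : Odd K := by
    have h1 : Odd (q*(2*V+1)) := hq_odd.mul (odd_two_mul_add_one V)
    have h2 : Odd (p*(2*U+1)) := hp_odd.mul (odd_two_mul_add_one U)
    have h3 : Odd (p*r*a^(N-n)) := (hp_odd.mul hr_odd).mul (ha_odd.pow)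
    exact (h1.sub_odd h2).add_odd h3
  have hKne : K ≠ 0 := by
    rintro h
    rw [h] at hKodd
    exact (Int.not_odd_iff_even.mpr Even.zero) hKodd
  have hK1 : (1:ℝ) ≤ |(K:ℝ)| := by
    have h := Int.one_le_abs hKne
    calc (1:ℝ) ≤ ((|K| : ℤ) : ℝ) := by exact_mod_cast h
      _ = |(K:ℝ)| := by push_cast; rfl
  have hcenter : (q:ℝ)*((2*(V:ℝ)+1)/(2*(a:ℝ)^N)) - (p:ℝ)*((2*(U:ℝ)+1)/(2*(a:ℝ)^N))
      + (p:ℝ)*((r:ℝ)/(2*(a:ℝ)^n)) = (K:ℝ)/(2*(a:ℝ)^N) := by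
    rw [hK]
    push_cast
    field_simp
    linear_combination (-(p:ℝ)*(r:ℝ)) * hpow
  have hF0 : (q:ℝ)*y - (p:ℝ)*x + (p:ℝ)*((r:ℝ)/(2*(a:ℝ)^n)) = 0 := by
    linear_combination hline
  have hE : (K:ℝ)/(2*(a:ℝ)^N)
      = (q:ℝ)*((2*(V:ℝ)+1)/(2*(a:ℝ)^N) - y) - (p:ℝ)*((2*(U:ℝ)+1)/(2*(a:ℝ)^N) - x) := by
    rw [← hcenter]
    linear_combination hF0
  have hq0 : (0:ℝ) ≤ (q:ℝ) := by exact_mod_cast (hp.le.trans hpq)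
  have hp0 : (0:ℝ) ≤ (p:ℝ) := by exact_mod_cast hp.le
  have habs : |(K:ℝ)|/(2*(a:ℝ)^N) ≤ ((p:ℝ)+(q:ℝ)) * (1/(2*(a:ℝ)^(N+1))) := by
    have h1 : |(K:ℝ)/(2*(a:ℝ)^N)| ≤ (q:ℝ) * (1/(2*(a:ℝ)^(N+1))) + (p:ℝ) * (1/(2*(a:ℝ)^(N+1))) := by
      rw [hE]
      calc |(q:ℝ)*((2*(V:ℝ)+1)/(2*(a:ℝ)^N) - y) - (p:ℝ)*((2*(U:ℝ)+1)/(2*(a:ℝ)^N) - x)|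
          ≤ |(q:ℝ)*((2*(V:ℝ)+1)/(2*(a:ℝ)^N) - y)| + |(p:ℝ)*((2*(U:ℝ)+1)/(2*(a:ℝ)^N) - x)| :=
            abs_sub _ _
        _ = (q:ℝ) * |(2*(V:ℝ)+1)/(2*(a:ℝ)^N) - y| + (p:ℝ) * |(2*(U:ℝ)+1)/(2*(a:ℝ)^N) - x| := by
            rw [abs_mul, abs_mul, abs_of_nonneg hq0, abs_of_nonneg hp0]
        _ ≤ (q:ℝ) * (1/(2*(a:ℝ)^(N+1))) + (p:ℝ) * (1/(2*(a:ℝ)^(N+1))) := by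
            gcongr
            · rw [abs_sub_comm]; exact hy
            · rw [abs_sub_comm]; exact hx
    have h2 : |(K:ℝ)/(2*(a:ℝ)^N)| = |(K:ℝ)|/(2*(a:ℝ)^N) := by
      rw [abs_div, abs_of_pos (by positivity : (0:ℝ) < 2*(a:ℝ)^N)]
    linarith [h1, h2 ▸ h1]
  have hsumR : (p:ℝ) + (q:ℝ) ≤ (a:ℝ) - 1 := by exact_mod_cast hsum
  have hfinal : (1:ℝ)/(2*(a:ℝ)^N) < (1:ℝ)/(2*(a:ℝ)^N) := by
    calc (1:ℝ)/(2*(a:ℝ)^N) ≤ |(K:ℝ)|/(2*(a:ℝ)^N) := by gcongr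
      _ ≤ ((p:ℝ)+(q:ℝ)) * (1/(2*(a:ℝ)^(N+1))) := habs
      _ ≤ ((a:ℝ)-1) * (1/(2*(a:ℝ)^(N+1))) := by gcongr
      _ < (a:ℝ) * (1/(2*(a:ℝ)^(N+1))) := by
          have : (0:ℝ) < 1/(2*(a:ℝ)^(N+1)) := by positivity
          nlinarith
      _ = (1:ℝ)/(2*(a:ℝ)^N) := by
          rw [hpow1]; field_simp
  exact absurd hfinal (lt_irrefl _)
end

section
/- Let a ≥ 3 be an odd integer, let p, q be integers with 0 ≤ p < q, p + q odd, and p + q ≤ a − 2, let m be a natural number, and let k be an integer. Then the line L = {(x, y) ∈ ℝ² : q·y = p·(x − k/a^m)} is disjoint from the closed square Q(a,N,U,V) for every integer N ≥ m and all integers U, V. In particular, a line through (k/a^m, 0) with slope in A_{a−2} is disjoint from every peripheral square of the Sierpinski carpet S_a whose side length is less than 1/a^m. -/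
theorem Aslope_old_shifted_line_disjoint_from_small_peripheral_squares
    (a p q : ℤ) (ha_odd : Odd a) (ha : 3 ≤ a)
    (hp : 0 ≤ p) (hpq : p < q) (hodd : Odd (p + q)) (hsum : p + q ≤ a - 2)
    (m : ℕ) (k : ℤ) :
    ∀ (N : ℕ), m ≤ N → ∀ (U V : ℤ),
      Disjoint
        {z : ℝ × ℝ | (q : ℝ) * z.2 = (p : ℝ) * (z.1 - (k : ℝ) / (a : ℝ) ^ m)}
        (carpetSquare a N U V) := by
  intro N hmN U V
  rw [Set.disjoint_left]
  rintro ⟨x, y⟩ hline ⟨hx, hy⟩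
  simp only [Set.mem_setOf_eq] at hline hx hy
  have hA3 : (3:ℝ) ≤ (a:ℝ) := by exact_mod_cast ha
  have hApos : (0:ℝ) < (a:ℝ) := by linarith
  have hAN : (0:ℝ) < (a:ℝ) ^ N := pow_pos hApos N
  have hAN1 : (0:ℝ) < (a:ℝ) ^ (N+1) := pow_pos hApos _
  have hAm : ((a:ℝ) ^ m) ≠ 0 := by positivity
  obtain ⟨t, ht⟩ := hodd
  set M : ℤ := q*(2*V+1) - p*(2*U+1) + 2*p*k*a^(N-m) with hM
  have hModd : Odd M := ⟨q*V - p*U + p*k*a^(N-m) + t - p, by rw [hM]; linear_combination ht⟩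
  have hMne : M ≠ 0 := by
    rintro h
    rw [h] at hModd
    exact (Int.not_odd_iff_even.mpr Even.zero) hModd
  have hM1 : (1:ℝ) ≤ |(M:ℝ)| := by
    have : (1:ℤ) ≤ |M| := Int.one_le_abs hMne
    calc (1:ℝ) ≤ ((|M|:ℤ):ℝ) := by exact_mod_cast this
    _ = |(M:ℝ)| := by push_cast; ring
  have hpow : (a:ℝ) ^ m * (a:ℝ) ^ (N - m) = (a:ℝ) ^ N := by
    rw [← pow_add, Nat.add_sub_cancel' hmN]
  set L : ℝ := (q:ℝ)*((2*(V:ℝ)+1)/(2*(a:ℝ)^N) - y) - (p:ℝ)*((2*(U:ℝ)+1)/(2*(a:ℝ)^N) - x)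
    with hL
  have hline' : (q:ℝ)*y*(a:ℝ)^m = (p:ℝ)*(x*(a:ℝ)^m - k) := by
    field_simp at hline; linarith [hline]
  have heq : 2*(a:ℝ)^(N+1)*L = (a:ℝ)*(M:ℝ) := by
    rw [hL, hM]
    push_cast
    rw [pow_succ]
    field_simp
    linear_combination (-2*(a:ℝ)^(N-m))*hline' +
      (2*((q:ℝ)*y - (p:ℝ)*x))*hpow
  have hq0 : (0:ℝ) ≤ (q:ℝ) := by exact_mod_cast le_of_lt (lt_of_le_of_lt hp hpq)
  have hp0 : (0:ℝ) ≤ (p:ℝ) := by exact_mod_cast hp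
  have habs : |L| ≤ ((p:ℝ)+(q:ℝ)) * (1 / (2*(a:ℝ)^(N+1))) := by
    have h1 : |(q:ℝ)*((2*(V:ℝ)+1)/(2*(a:ℝ)^N) - y)| ≤ (q:ℝ) * (1/(2*(a:ℝ)^(N+1))) := by
      rw [abs_mul, abs_of_nonneg hq0]
      exact mul_le_mul_of_nonneg_left (by rw [abs_sub_comm]; exact hy) hq0
    have h2 : |(p:ℝ)*((2*(U:ℝ)+1)/(2*(a:ℝ)^N) - x)| ≤ (p:ℝ) * (1/(2*(a:ℝ)^(N+1))) := by
      rw [abs_mul, abs_of_nonneg hp0]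
      exact mul_le_mul_of_nonneg_left (by rw [abs_sub_comm]; exact hx) hp0
    calc |L| ≤ |(q:ℝ)*((2*(V:ℝ)+1)/(2*(a:ℝ)^N) - y)| +
        |(p:ℝ)*((2*(U:ℝ)+1)/(2*(a:ℝ)^N) - x)| := abs_sub _ _
      _ ≤ ((p:ℝ)+(q:ℝ)) * (1 / (2*(a:ℝ)^(N+1))) := by linarith
  have hfin : (a:ℝ)*|(M:ℝ)| ≤ (p:ℝ)+(q:ℝ) := by
    have : |2*(a:ℝ)^(N+1)*L| = (a:ℝ)*|(M:ℝ)| := by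
      rw [heq, abs_mul, abs_of_pos hApos]
    rw [abs_mul, abs_of_pos (by positivity : (0:ℝ) < 2*(a:ℝ)^(N+1))] at this
    have h2 : 2*(a:ℝ)^(N+1)*|L| ≤ 2*(a:ℝ)^(N+1)*(((p:ℝ)+(q:ℝ)) * (1/(2*(a:ℝ)^(N+1)))) :=
      mul_le_mul_of_nonneg_left habs (by positivity)
    rw [this] at h2
    calc (a:ℝ)*|(M:ℝ)| ≤ 2*(a:ℝ)^(N+1)*(((p:ℝ)+(q:ℝ)) * (1/(2*(a:ℝ)^(N+1)))) := h2
      _ = (p:ℝ)+(q:ℝ) := by field_simp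
  have hsum' : (p:ℝ)+(q:ℝ) ≤ (a:ℝ) - 2 := by exact_mod_cast hsum
  nlinarith [hfin, hM1, hApos]
end

section
/- Let F : ℝ → ℝ be the folding map F(s) = the distance from s to the nearest even integer (so F is 2-periodic, takes values in [0,1], F(s) = s for s ∈ [0,1] and F(s) = 2 − s for s ∈ [1,2]). Let a ≥ 3 be an odd integer and let p, q be integers with 0 ≤ p < q, p + q odd, and p + q ≤ a − 2. Then for every real number t, every natural number N, and all integers U, V, the point (F(q·t), F(p·t)) does not lie in the closed square Q(a,N,U,V); moreover (F(q·(t+2)), F(p·(t+2))) = (F(q·t), F(p·t)) for all t. Consequently the billiard trajectory in the unit square starting at (0,0) with direction vector (q,p), whose position is (F(q·t), F(p·t)), is periodic and avoids all peripheral squares of every prefractal approximation S_{a,N} of the self-similar Sierpinski carpet S_a. -/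
/-- The folding map: `fold s` is the distance from `s` to the nearest even
integer.  It is 2-periodic, takes values in `[0,1]`, `fold s = s` for
`s ∈ [0,1]` and `fold s = 2 - s` for `s ∈ [1,2]`. -/
noncomputable def fold (s : ℝ) : ℝ := |s - 2 * round (s / 2)|

lemma fold_lin (s : ℝ) : ∃ (ε m : ℤ), (ε = 1 ∨ ε = -1) ∧ fold s = ε * s + 2 * m := by
  rcases abs_choice (s - 2 * (round (s / 2) : ℤ)) with h | h
  · exact ⟨1, -round (s / 2), Or.inl rfl, by unfold fold; rw [h]; push_cast; ring⟩
  · exact ⟨-1, round (s / 2), Or.inr rfl, by unfold fold; rw [h]; push_cast; ring⟩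

lemma fold_add_even (s : ℝ) (n : ℤ) : fold (s + 2 * n) = fold s := by
  unfold fold
  rw [show (s + 2 * (n : ℝ)) / 2 = s / 2 + n by ring, round_add_intCast]
  congr 1
  push_cast
  ring

theorem billiard_orbit_periodic_and_avoids_peripheral_squares
    (a p q : ℤ) (ha_odd : Odd a) (ha : 3 ≤ a)
    (hp : 0 ≤ p) (hpq : p < q) (hodd : Odd (p + q)) (hsum : p + q ≤ a - 2) :
    (∀ (t : ℝ) (N : ℕ) (U V : ℤ),
        (fold ((q : ℝ) * t), fold ((p : ℝ) * t)) ∉ carpetSquare a N U V) ∧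
    (∀ t : ℝ,
        (fold ((q : ℝ) * (t + 2)), fold ((p : ℝ) * (t + 2))) =
          (fold ((q : ℝ) * t), fold ((p : ℝ) * t))) := by
  have ha0 : (0:ℝ) < (a:ℝ) := by exact_mod_cast lt_of_lt_of_le (by norm_num) ha
  constructor
  · intro t N U V hmem
    simp only [carpetSquare, Set.mem_setOf_eq] at hmem
    obtain ⟨h1, h2⟩ := hmem
    obtain ⟨ε₁, m₁, hε₁, hx⟩ := fold_lin ((q : ℝ) * t)
    obtain ⟨ε₂, m₂, hε₂, hy⟩ := fold_lin ((p : ℝ) * t)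
    set x := fold ((q:ℝ) * t) with hxdef
    set y := fold ((p:ℝ) * t) with hydef
    have hA : (0:ℝ) < (a:ℝ) ^ N := by positivity
    have hA1 : (0:ℝ) < (a:ℝ) ^ (N+1) := by positivity
    have hs1 : (ε₁:ℝ) * ε₁ = 1 := by rcases hε₁ with h|h <;> subst h <;> norm_num
    have hs2 : (ε₂:ℝ) * ε₂ = 1 := by rcases hε₂ with h|h <;> subst h <;> norm_num
    have hp0R : (0:ℝ) ≤ (p:ℝ) := by exact_mod_cast hp
    have hq0R : (0:ℝ) ≤ (q:ℝ) := by
      have : (0:ℤ) ≤ q := le_of_lt (lt_of_le_of_lt hp hpq)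
      exact_mod_cast this
    have key : ((ε₁:ℝ)*(p:ℝ)) * x - ((ε₂:ℝ)*(q:ℝ)) * y
        = 2 * ((ε₁*p*m₁ - ε₂*q*m₂ : ℤ) : ℝ) := by
      rw [hx, hy]
      push_cast
      linear_combination ((p:ℝ)*q*t) * hs1 - ((p:ℝ)*q*t) * hs2
    -- the integer J
    set k : ℤ := ε₁*p*m₁ - ε₂*q*m₂ with hk
    set J : ℤ := 4*(a^N*k) - (ε₁*(p*(2*U+1)) - ε₂*(q*(2*V+1))) with hJ
    have hJcast : (J:ℝ) = 2*(a:ℝ)^N *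
        (((ε₁:ℝ)*(p:ℝ)) * (x - (2*(U:ℝ)+1)/(2*(a:ℝ)^N))
         - ((ε₂:ℝ)*(q:ℝ)) * (y - (2*(V:ℝ)+1)/(2*(a:ℝ)^N))) := by
      rw [hJ]
      push_cast
      field_simp
      linear_combination (-2*(a:ℝ)^N) * key
    have he1 : |((ε₁:ℝ)*(p:ℝ))| = (p:ℝ) := by
      rcases hε₁ with h|h <;> subst h <;> push_cast <;>
        simp [abs_mul, abs_of_nonneg hp0R]
    have he2 : |((ε₂:ℝ)*(q:ℝ))| = (q:ℝ) := by
      rcases hε₂ with h|h <;> subst h <;> push_cast <;>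
        simp [abs_mul, abs_of_nonneg hq0R]
    have hb1 : |((ε₁:ℝ)*(p:ℝ)) * (x - (2*(U:ℝ)+1)/(2*(a:ℝ)^N))|
        ≤ (p:ℝ) * (1 / (2*(a:ℝ)^(N+1))) := by
      rw [abs_mul, he1]
      exact mul_le_mul_of_nonneg_left h1 hp0R
    have hb2 : |((ε₂:ℝ)*(q:ℝ)) * (y - (2*(V:ℝ)+1)/(2*(a:ℝ)^N))|
        ≤ (q:ℝ) * (1 / (2*(a:ℝ)^(N+1))) := by
      rw [abs_mul, he2]
      exact mul_le_mul_of_nonneg_left h2 hq0R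
    have hJabs : |(J:ℝ)| ≤ ((p:ℝ) + q) / a := by
      rw [hJcast]
      have hsum' : |((ε₁:ℝ)*(p:ℝ)) * (x - (2*(U:ℝ)+1)/(2*(a:ℝ)^N))
          - ((ε₂:ℝ)*(q:ℝ)) * (y - (2*(V:ℝ)+1)/(2*(a:ℝ)^N))|
          ≤ ((p:ℝ) + q) * (1 / (2*(a:ℝ)^(N+1))) := by
        calc _ ≤ _ := abs_sub _ _
          _ ≤ ((p:ℝ) + q) * (1 / (2*(a:ℝ)^(N+1))) := by
              rw [add_mul]; exact add_le_add hb1 hb2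
      rw [abs_mul, abs_of_nonneg (by positivity : (0:ℝ) ≤ 2*(a:ℝ)^N)]
      calc 2*(a:ℝ)^N * _ ≤ 2*(a:ℝ)^N * (((p:ℝ) + q) * (1 / (2*(a:ℝ)^(N+1)))) :=
            mul_le_mul_of_nonneg_left hsum' (by positivity)
        _ = ((p:ℝ) + q) / a := by rw [pow_succ]; field_simp
    have hlt : ((p:ℝ) + q) / a < 1 := by
      rw [div_lt_one ha0]
      have : (p:ℝ) + q ≤ (a:ℝ) - 2 := by exact_mod_cast hsum
      linarith
    have hJ1 : |(J:ℝ)| < 1 := lt_of_le_of_lt hJabs hlt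
    have hJz : J = 0 := by
      have h' : |J| < 1 := by exact_mod_cast (by rwa [← Int.cast_abs] at hJ1 : ((|J|:ℤ):ℝ) < 1)
      rcases abs_lt.mp h' with ⟨hl, hr⟩
      omega
    -- parity contradiction
    obtain ⟨c, hc⟩ := hodd
    rw [hJ] at hJz
    have hX : p*(2*U+1) = 2*(p*U) + p := by ring
    have hY : q*(2*V+1) = 2*(q*V) + q := by ring
    rcases hε₁ with h|h <;> rcases hε₂ with h'|h' <;> subst h <;> subst h' <;>
      (simp only [one_mul, neg_mul, neg_one_mul, sub_neg_eq_add, neg_neg] at hJz;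
       rw [hX, hY] at hJz;
       generalize a ^ N * k = T at hJz;
       generalize p * U = PU at hJz;
       generalize q * V = QV at hJz;
       omega)
  · intro t
    have h1 : (q:ℝ) * (t + 2) = (q:ℝ) * t + 2 * (q:ℤ) := by push_cast; ring
    have h2 : (p:ℝ) * (t + 2) = (p:ℝ) * t + 2 * (p:ℤ) := by push_cast; ring
    rw [h1, h2, fold_add_even, fold_add_even]
end
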